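/- Let d ≥ 1 and b ≥ 1 be integers. Let G_b = {−(2^b − 1)/2 + k : k = 0, 1, …, 2^b − 1}^d ⊂ ℝ^d be the centered uniform grid (every element of G_b is nonzero since all its entries are nonzero half-integers). Define Q_b : ℝ → ℝ by Q_b(u) = sgn(u) · min(⌊|u|⌋ + 1/2, 2^{b−1} − 1/2), with the convention sgn(0) = 1. Then for every z ∈ S^{d−1}: inf over t > 0 and g ∈ G_b of ‖z − t·g‖₂² equals 1 − max over g ∈ G_b of ⟨z, g/‖g‖₂⟩², and both equal inf over α > 0 of (1/d) · Σ_{j=1}^{d} (√d·z_j − α·Q_b(√d·z_j/α))². -/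

import Mathlib

open scoped RealInnerProductSpace

/-- The centered uniform grid `G_b = {-(2^b-1)/2 + k : k = 0,…,2^b-1}^d ⊂ ℝ^d`. -/
def gridSet (d b : ℕ) : Set (EuclideanSpace ℝ (Fin d)) :=
  {g | ∀ j : Fin d, ∃ k : ℕ, k < 2 ^ b ∧ g j = -(((2 : ℝ) ^ b - 1) / 2) + (k : ℝ)}

/-- The scalar quantizer `Q_b(u) = sgn(u) · min(⌊|u|⌋ + 1/2, 2^{b-1} - 1/2)`, with the
convention `sgn 0 = 1`. -/
noncomputable def Qb (b : ℕ) (u : ℝ) : ℝ :=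
  (if u < 0 then (-1 : ℝ) else 1) * min ((⌊|u|⌋ : ℝ) + 1 / 2) ((2 : ℝ) ^ (b - 1) - 1 / 2)

namespace Stmt9aux

def L (b : ℕ) : Set ℝ := {x | ∃ k : ℕ, k < 2 ^ b ∧ x = -(((2:ℝ)^b - 1)/2) + k}

lemma two_pow_eq {b : ℕ} (hb : 1 ≤ b) : (2:ℝ)^b = 2 * 2^(b-1) := by
  conv_lhs => rw [show b = (b-1)+1 by omega]
  rw [pow_succ]; ring

lemma mem_L_iff {b : ℕ} (hb : 1 ≤ b) {x : ℝ} :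
    x ∈ L b ↔ ∃ j : ℤ, -(2^(b-1)) ≤ j ∧ j ≤ 2^(b-1) - 1 ∧ x = (j : ℝ) + 1/2 := by
  have h2 : (2:ℝ)^b = 2 * 2^(b-1) := two_pow_eq hb
  have h2' : ((2:ℕ)^b : ℤ) = 2 * 2^(b-1) := by
    push_cast
    conv_lhs => rw [show b = (b-1)+1 by omega]
    rw [pow_succ]; ring
  constructor
  · rintro ⟨k, hk, rfl⟩
    refine ⟨(k : ℤ) - 2^(b-1), by omega, by omega, ?_⟩
    push_cast
    linarith
  · rintro ⟨j, hj1, hj2, rfl⟩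
    refine ⟨(j + 2^(b-1)).toNat, by omega, ?_⟩
    have : (((j + 2^(b-1)).toNat : ℕ) : ℝ) = (j : ℝ) + 2^(b-1) := by
      rw [← Int.cast_natCast, Int.toNat_of_nonneg (by omega)]
      push_cast; ring
    rw [this]
    linarith

lemma mem_L_ne_zero {b : ℕ} (hb : 1 ≤ b) {x : ℝ} (hx : x ∈ L b) : x ≠ 0 := by
  rw [mem_L_iff hb] at hx
  obtain ⟨j, _, _, rfl⟩ := hx
  intro h
  have : (2*j + 1 : ℝ) = 0 := by linarith
  have : (2*j + 1 : ℤ) = 0 := by exact_mod_cast this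
  omega

lemma neg_mem_L {b : ℕ} (hb : 1 ≤ b) {x : ℝ} (hx : x ∈ L b) : -x ∈ L b := by
  rw [mem_L_iff hb] at hx ⊢
  obtain ⟨j, hj1, hj2, rfl⟩ := hx
  exact ⟨-j - 1, by omega, by omega, by push_cast; ring⟩

lemma half_mem_L {b : ℕ} (hb : 1 ≤ b) : (1/2 : ℝ) ∈ L b := by
  rw [mem_L_iff hb]
  have hN : (0:ℤ) < 2^(b-1) := by positivity
  exact ⟨0, by omega, by omega, by norm_num⟩

-- the min in Qb as an integer min
lemma Qb_eq {b : ℕ} (hb : 1 ≤ b) (u : ℝ) :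
    Qb b u = (if u < 0 then (-1:ℝ) else 1) * ((min ⌊|u|⌋ (2^(b-1) - 1) : ℤ) + 1/2) := by
  have h0 : ((min ⌊|u|⌋ (2^(b-1) - 1) : ℤ) : ℝ) = min ((⌊|u|⌋ : ℝ)) ((2:ℝ)^(b-1) - 1) := by
    push_cast; rfl
  rw [h0, Qb]
  rcases le_total ((⌊|u|⌋ : ℝ)) ((2:ℝ)^(b-1) - 1) with h | h
  · rw [min_eq_left h, min_eq_left (by linarith)]
  · rw [min_eq_right h, min_eq_right (by linarith)]; ring_nf

lemma Qb_mem_L {b : ℕ} (hb : 1 ≤ b) (u : ℝ) : Qb b u ∈ L b := by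
  rw [mem_L_iff hb, Qb_eq hb]
  have hf0 : (0:ℤ) ≤ ⌊|u|⌋ := Int.floor_nonneg.mpr (abs_nonneg u)
  have hN : (0:ℤ) < 2^(b-1) := by positivity
  by_cases hu : u < 0
  · refine ⟨-(min ⌊|u|⌋ (2^(b-1) - 1)) - 1, by omega, by omega, ?_⟩
    rw [if_pos hu]; push_cast; ring
  · refine ⟨min ⌊|u|⌋ (2^(b-1) - 1), by omega, by omega, ?_⟩
    rw [if_neg hu]; push_cast; ring

lemma Qb_nearest {b : ℕ} (hb : 1 ≤ b) (u : ℝ) {c : ℝ} (hc : c ∈ L b) :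
    |u - Qb b u| ≤ |u - c| := by
  rw [mem_L_iff hb] at hc
  obtain ⟨j, hj1, hj2, rfl⟩ := hc
  rw [Qb_eq hb]
  have hN : (0:ℤ) < 2^(b-1) := by positivity
  have hNR : ((2:ℤ)^(b-1) : ℝ) = (2:ℝ)^(b-1) := by push_cast; ring
  by_cases hu : u < 0
  · have hfl : (⌊-u⌋ : ℝ) ≤ -u := Int.floor_le _
    have hfu : -u < (⌊-u⌋ : ℝ) + 1 := Int.lt_floor_add_one _
    have habs : |u| = -u := abs_of_neg hu
    rw [if_pos hu, habs]
    rcases le_or_gt ⌊-u⌋ (2^(b-1) - 1) with h | h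
    · rw [min_eq_left h]
      -- Q = -(⌊-u⌋ + 1/2), nearest half-integer
      have h1 : |u - (-1) * ((⌊-u⌋:ℝ) + 1/2)| ≤ 1/2 := by
        rw [abs_le]; constructor <;> push_cast <;> linarith
      rcases lt_trichotomy j (-⌊-u⌋ - 1) with hj | hj | hj
      · have : (j:ℝ) ≤ -(⌊-u⌋:ℝ) - 2 := by
          have : j ≤ -⌊-u⌋ - 2 := by omega
          exact_mod_cast this
        refine h1.trans (le_abs.mpr (Or.inl (by linarith)))
      · subst hj; push_cast; apply le_of_eq; ring_nf
      · have : -(⌊-u⌋:ℝ) ≤ (j:ℝ) := by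
          have : -⌊-u⌋ ≤ j := by omega
          exact_mod_cast this
        refine h1.trans (le_abs.mpr (Or.inr (by linarith)))
    · rw [min_eq_right (by omega)]
      -- clipped: Q = -(2^(b-1) - 1/2) ≥ u, and all levels are ≥ Q
      have hZ : (2:ℝ)^(b-1) ≤ (⌊-u⌋ : ℝ) := by
        exact_mod_cast (by omega : (2:ℤ)^(b-1) ≤ ⌊-u⌋)
      have hcge : -((2:ℝ)^(b-1)) ≤ (j:ℝ) := by exact_mod_cast hj1
      push_cast
      rw [abs_of_nonpos (by linarith), abs_of_nonpos (by linarith)]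
      linarith
  · push_neg at hu
    have hfl : (⌊u⌋ : ℝ) ≤ u := Int.floor_le _
    have hfu : u < (⌊u⌋:ℝ) + 1 := Int.lt_floor_add_one _
    have habs : |u| = u := abs_of_nonneg hu
    rw [if_neg (not_lt.mpr hu), habs, one_mul]
    rcases le_or_gt ⌊u⌋ (2^(b-1) - 1) with h | h
    · rw [min_eq_left h]
      have h1 : |u - ((⌊u⌋:ℝ) + 1/2)| ≤ 1/2 := by
        rw [abs_le]; constructor <;> push_cast <;> linarith
      rcases lt_trichotomy j ⌊u⌋ with hj | hj | hj
      · have : (j:ℝ) ≤ (⌊u⌋:ℝ) - 1 := by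
          have : j ≤ ⌊u⌋ - 1 := by omega
          exact_mod_cast this
        refine h1.trans (le_abs.mpr (Or.inl (by linarith)))
      · subst hj; push_cast; apply le_of_eq; ring_nf
      · have : (⌊u⌋:ℝ) + 1 ≤ (j:ℝ) := by
          have : ⌊u⌋ + 1 ≤ j := by omega
          exact_mod_cast this
        refine h1.trans (le_abs.mpr (Or.inr (by linarith)))
    · rw [min_eq_right (by omega)]
      have hZ : (2:ℝ)^(b-1) ≤ (⌊u⌋ : ℝ) := by
        exact_mod_cast (by omega : (2:ℤ)^(b-1) ≤ ⌊u⌋)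
      have hcle : (j:ℝ) ≤ (2:ℝ)^(b-1) - 1 := by
        exact_mod_cast hj2
      push_cast
      rw [abs_of_nonneg (by linarith), abs_of_nonneg (by linarith)]
      linarith

end Stmt9aux


section Main

variable {d b : ℕ}

lemma Stmt9aux.mem_grid (g : EuclideanSpace ℝ (Fin d)) :
    g ∈ gridSet d b ↔ ∀ j, g j ∈ Stmt9aux.L b := Iff.rfl

lemma Stmt9aux.norm_sq_eq (x : EuclideanSpace ℝ (Fin d)) : ‖x‖^2 = ∑ j, (x j)^2 := by
  rw [EuclideanSpace.norm_eq, Real.sq_sqrt (by positivity)]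
  simp [sq_abs]

lemma Stmt9aux.inner_eq (x y : EuclideanSpace ℝ (Fin d)) : ⟪x, y⟫ = ∑ j, x j * y j := by
  rw [PiLp.inner_apply]
  simp [RCLike.inner_apply]
  exact Finset.sum_congr rfl (fun _ _ => mul_comm _ _)

end Main

theorem stmt9 (d b : ℕ) (hd : 1 ≤ d) (hb : 1 ≤ b)
    (z : EuclideanSpace ℝ (Fin d)) (hz : ‖z‖ = 1) :
    sInf {v : ℝ | ∃ t : ℝ, 0 < t ∧ ∃ g ∈ gridSet d b, v = ‖z - t • g‖ ^ 2}
        = 1 - sSup {v : ℝ | ∃ g ∈ gridSet d b, v = ⟪z, ‖g‖⁻¹ • g⟫ ^ 2} ∧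
    sInf {v : ℝ | ∃ t : ℝ, 0 < t ∧ ∃ g ∈ gridSet d b, v = ‖z - t • g‖ ^ 2}
        = sInf {v : ℝ | ∃ α : ℝ, 0 < α ∧
            v = (1 / (d : ℝ)) *
              ∑ j : Fin d,
                (Real.sqrt d * z j - α * Qb b (Real.sqrt d * z j / α)) ^ 2} := by
  classical
  open Stmt9aux in
  set S := {v : ℝ | ∃ t : ℝ, 0 < t ∧ ∃ g ∈ gridSet d b, v = ‖z - t • g‖ ^ 2} with hSdef
  set T := {v : ℝ | ∃ g ∈ gridSet d b, v = ⟪z, ‖g‖⁻¹ • g⟫ ^ 2} with hTdef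
  set A := {v : ℝ | ∃ α : ℝ, 0 < α ∧
      v = (1 / (d : ℝ)) *
        ∑ j : Fin d, (Real.sqrt d * z j - α * Qb b (Real.sqrt d * z j / α)) ^ 2} with hAdef
  -- grid facts
  have hgpos : ∀ {g : EuclideanSpace ℝ (Fin d)}, g ∈ gridSet d b → 0 < ‖g‖ := by
    intro g hgg
    rw [norm_pos_iff]
    intro h
    exact Stmt9aux.mem_L_ne_zero hb (hgg ⟨0, hd⟩) (by rw [h]; rfl)
  have hgneg : ∀ {g : EuclideanSpace ℝ (Fin d)}, g ∈ gridSet d b → -g ∈ gridSet d b := by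
    intro g hgg j
    have := Stmt9aux.neg_mem_L hb (hgg j)
    simpa [Stmt9aux.L] using this
  have hgP : (WithLp.toLp 2 (fun _ => (1/2 : ℝ)) : EuclideanSpace ℝ (Fin d)) ∈ gridSet d b :=
    fun _ => Stmt9aux.half_mem_L hb
  -- norm expansion
  have hnorm : ∀ (t : ℝ) (g : EuclideanSpace ℝ (Fin d)),
      ‖z - t • g‖ ^ 2 = 1 - 2 * (t * ⟪z, g⟫) + t ^ 2 * ‖g‖ ^ 2 := by
    intro t g
    rw [norm_sub_sq_real, real_inner_smul_right, norm_smul, hz, Real.norm_eq_abs,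
      mul_pow, sq_abs]
    ring
  have hSne : S.Nonempty := ⟨_, 1, one_pos, _, hgP, rfl⟩
  have hSbdd : BddBelow S := ⟨0, by rintro v ⟨t, ht, g, hg, rfl⟩; positivity⟩
  -- T is finite, nonempty, bounded
  have hLfin : (Stmt9aux.L b).Finite := by
    have hsub : Stmt9aux.L b ⊆ (fun k : ℕ => -(((2:ℝ)^b - 1)/2) + k) '' Set.Iio (2^b) := by
      rintro x ⟨k, hk, rfl⟩; exact ⟨k, hk, rfl⟩
    exact ((Set.finite_Iio _).image _).subset hsub
  have hGfin : (gridSet d b).Finite := by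
    have hsub : gridSet d b ⊆ WithLp.toLp 2 '' Set.univ.pi (fun _ : Fin d => Stmt9aux.L b) := by
      intro g hg; exact ⟨WithLp.ofLp g, fun j _ => hg j, rfl⟩
    exact ((Set.Finite.pi (fun _ => hLfin)).image _).subset hsub
  have hTim : T = (fun g : EuclideanSpace ℝ (Fin d) => ⟪z, ‖g‖⁻¹ • g⟫ ^ 2) '' gridSet d b := by
    ext v
    simp only [hTdef, Set.mem_setOf_eq, Set.mem_image]
    constructor
    · rintro ⟨g, hg, rfl⟩; exact ⟨g, hg, rfl⟩
    · rintro ⟨g, hg, rfl⟩; exact ⟨g, hg, rfl⟩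
  have hTfin : T.Finite := hTim ▸ hGfin.image _
  have hTne : T.Nonempty := ⟨_, _, hgP, rfl⟩
  set M := sSup T with hMdef
  have hMmem : M ∈ T := hTne.csSup_mem hTfin
  have hMub : ∀ g ∈ gridSet d b, (‖g‖⁻¹ * ⟪z, g⟫) ^ 2 ≤ M := by
    intro g hg
    have : ⟪z, ‖g‖⁻¹ • g⟫ ^ 2 ∈ T := ⟨g, hg, rfl⟩
    have h := le_csSup hTfin.bddAbove this
    rwa [real_inner_smul_right] at h
  -- M is positive
  have hMpos : 0 < M := by
    have hzne : z ≠ 0 := by intro h; rw [h, norm_zero] at hz; norm_num at hz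
    obtain ⟨j0, hj0⟩ : ∃ j, z j ≠ 0 := by
      by_contra h
      push_neg at h
      exact hzne (by ext j; exact h j)
    set gP : EuclideanSpace ℝ (Fin d) := WithLp.toLp 2 (fun _ => (1/2 : ℝ)) with hgPdef
    set gM : EuclideanSpace ℝ (Fin d) := WithLp.toLp 2 (fun j => if j = j0 then -(1/2 : ℝ) else 1/2)
      with hgMdef
    have hgMmem : gM ∈ gridSet d b := by
      intro j
      show (if j = j0 then -(1/2 : ℝ) else 1/2) ∈ Stmt9aux.L b
      by_cases hj : j = j0
      · rw [if_pos hj]; exact Stmt9aux.neg_mem_L hb (Stmt9aux.half_mem_L hb)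
      · rw [if_neg hj]; exact Stmt9aux.half_mem_L hb
    have hdiff : ⟪z, gP⟫ - ⟪z, gM⟫ = z j0 := by
      rw [Stmt9aux.inner_eq, Stmt9aux.inner_eq, ← Finset.sum_sub_distrib]
      rw [Finset.sum_eq_single j0]
      · simp [hgPdef, hgMdef]; ring
      · intro j _ hj; simp [hgPdef, hgMdef, hj]
      · intro h; exact absurd (Finset.mem_univ j0) h
    obtain ⟨g1, hg1, hip1⟩ : ∃ g ∈ gridSet d b, ⟪z, g⟫ ≠ 0 := by
      by_cases h : ⟪z, gP⟫ = 0
      · exact ⟨gM, hgMmem, by intro h2; rw [h, h2] at hdiff; simp at hdiff; exact hj0 hdiff.symm⟩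
      · exact ⟨gP, hgP, h⟩
    have hne : ‖g1‖⁻¹ * ⟪z, g1⟫ ≠ 0 :=
      mul_ne_zero (inv_ne_zero (ne_of_gt (hgpos hg1))) hip1
    have := hMub g1 hg1
    have hp : 0 < (‖g1‖⁻¹ * ⟪z, g1⟫) ^ 2 :=
      lt_of_le_of_ne (sq_nonneg _) (Ne.symm (pow_ne_zero 2 hne))
    linarith
  -- Part 1
  have part1 : sInf S = 1 - M := by
    apply le_antisymm
    · -- pick the maximizing grid point, make its inner product positive
      obtain ⟨g0, hg0, hMg0⟩ := hMmem
      rw [real_inner_smul_right] at hMg0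
      have hip0 : ⟪z, g0⟫ ≠ 0 := by
        intro h
        rw [h] at hMg0
        simp at hMg0
        rw [hMg0] at hMpos
        exact lt_irrefl _ hMpos
      obtain ⟨g, hg, hip, hMg⟩ : ∃ g ∈ gridSet d b, 0 < ⟪z, g⟫ ∧
          M = (‖g‖⁻¹ * ⟪z, g⟫) ^ 2 := by
        rcases hip0.lt_or_gt with h | h
        · refine ⟨-g0, hgneg hg0, ?_, ?_⟩
          · rw [inner_neg_right]; linarith
          · rw [norm_neg, inner_neg_right, hMg0]; ring
        · exact ⟨g0, hg0, h, hMg0⟩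
      have hn : 0 < ‖g‖ := hgpos hg
      have hn2 : (0:ℝ) < ‖g‖ ^ 2 := by positivity
      set t := ⟪z, g⟫ / ‖g‖ ^ 2 with htdef
      have ht : 0 < t := div_pos hip hn2
      apply csInf_le hSbdd
      refine ⟨t, ht, g, hg, ?_⟩
      rw [hnorm t g, hMg, htdef]
      field_simp
      ring
    · apply le_csInf hSne
      rintro v ⟨t, ht, g, hg, rfl⟩
      rw [hnorm t g]
      have hn : 0 < ‖g‖ := hgpos hg
      have hn2 : (0:ℝ) < ‖g‖ ^ 2 := by positivity
      have h1 := hMub g hg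
      have h2 : ⟪z, g⟫ ^ 2 ≤ M * ‖g‖ ^ 2 := by
        have he : (‖g‖⁻¹ * ⟪z, g⟫) ^ 2 * ‖g‖ ^ 2 = ⟪z, g⟫ ^ 2 := by
          field_simp
        nlinarith
      nlinarith [sq_nonneg (t * ‖g‖ ^ 2 - ⟪z, g⟫), h2, hn2]
  refine ⟨part1, ?_⟩
  -- Part 2
  have hd0 : (0:ℝ) < d := by exact_mod_cast hd
  have hs : (0:ℝ) < Real.sqrt d := Real.sqrt_pos.mpr hd0
  have hsq : (Real.sqrt d) ^ 2 = (d : ℝ) := Real.sq_sqrt (le_of_lt hd0)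
  -- the common reduction: for t, α with √d * t = α and grid point g,
  -- ‖z - t•g‖² = (1/d) ∑ (√d z j - α g j)²
  have hred : ∀ (t α : ℝ), Real.sqrt d * t = α → ∀ g : EuclideanSpace ℝ (Fin d),
      ‖z - t • g‖ ^ 2 = (1 / (d:ℝ)) * ∑ j, (Real.sqrt d * z j - α * g j) ^ 2 := by
    intro t α hta g
    rw [Stmt9aux.norm_sq_eq, Finset.mul_sum]
    apply Finset.sum_congr rfl
    intro j _
    have happ : (z - t • g) j = z j - t * g j := by
      simp [PiLp.sub_apply, PiLp.smul_apply, smul_eq_mul]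
    have hkey : Real.sqrt d * z j - α * g j = Real.sqrt d * (z j - t * g j) := by
      rw [← hta]; ring
    rw [happ, hkey, mul_pow, hsq]
    field_simp
  have hAne : A.Nonempty := ⟨_, 1, one_pos, rfl⟩
  have hAbdd : BddBelow A := by
    refine ⟨0, ?_⟩
    rintro v ⟨α, hα, rfl⟩
    positivity
  apply le_antisymm
  · apply le_csInf hAne
    rintro v ⟨α, hα, rfl⟩
    set g : EuclideanSpace ℝ (Fin d) := WithLp.toLp 2 (fun j => Qb b (Real.sqrt d * z j / α)) with hgdef
    have hgmem : g ∈ gridSet d b := fun j => Stmt9aux.Qb_mem_L hb _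
    set t := α / Real.sqrt d with htdef
    have ht : 0 < t := div_pos hα hs
    have hta : Real.sqrt d * t = α := by
      rw [htdef]; field_simp
    apply csInf_le hSbdd
    exact ⟨t, ht, g, hgmem, (hred t α hta g).symm⟩
  · apply le_csInf hSne
    rintro v ⟨t, ht, g, hg, rfl⟩
    set α := Real.sqrt d * t with hαdef
    have hα : 0 < α := mul_pos hs ht
    have hterm : ∀ j, (Real.sqrt d * z j - α * Qb b (Real.sqrt d * z j / α)) ^ 2
        ≤ (Real.sqrt d * z j - α * g j) ^ 2 := by
      intro j
      have h1 : |Real.sqrt d * z j / α - Qb b (Real.sqrt d * z j / α)|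
          ≤ |Real.sqrt d * z j / α - g j| := Stmt9aux.Qb_nearest hb _ (hg j)
      have h2 : |α * (Real.sqrt d * z j / α - Qb b (Real.sqrt d * z j / α))|
          ≤ |α * (Real.sqrt d * z j / α - g j)| := by
        rw [abs_mul α (Real.sqrt d * z j / α - Qb b (Real.sqrt d * z j / α)),
          abs_mul α (Real.sqrt d * z j / α - g j)]
        exact mul_le_mul_of_nonneg_left h1 (abs_nonneg α)
      have hαu : α * (Real.sqrt d * z j / α) = Real.sqrt d * z j := by
        field_simp
      rw [mul_sub, mul_sub, hαu] at h2
      calc (Real.sqrt d * z j - α * Qb b (Real.sqrt d * z j / α)) ^ 2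
          = |Real.sqrt d * z j - α * Qb b (Real.sqrt d * z j / α)| ^ 2 := (sq_abs _).symm
        _ ≤ |Real.sqrt d * z j - α * g j| ^ 2 := by
            exact pow_le_pow_left₀ (abs_nonneg _) h2 2
        _ = (Real.sqrt d * z j - α * g j) ^ 2 := sq_abs _
    have hle : (1 / (d:ℝ)) * ∑ j, (Real.sqrt d * z j - α * Qb b (Real.sqrt d * z j / α)) ^ 2
        ≤ ‖z - t • g‖ ^ 2 := by
      rw [hred t α rfl g]
      exact mul_le_mul_of_nonneg_left (Finset.sum_le_sum fun j _ => hterm j) (by positivity)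
    exact le_trans (csInf_le hAbdd ⟨α, hα, rfl⟩) hle
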